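/- Let A₁,…,A_m be real symmetric n×n matrices, x₀ ∈ ℝⁿ, X₀ = x₀x₀ᵀ, and S = {Σᵢ λᵢAᵢ + Q : λ ∈ ℝ^m, Q ⪯ 0, ⟨Q, X₀⟩ = 0}. If S satisfies the completeness condition at X₀ — whenever A = Σᵢ λᵢAᵢ ⪰ 0 and ⟨A, X₀⟩ = 0, then yqᵀ + qyᵀ ∈ S for all y ∈ ℝⁿ and all q in the range of A — then S is a closed subset of the space of real symmetric n×n matrices. -/

import Mathlib

open Matrix

section Aux

variable {n : ℕ}

attribute [local instance] Matrix.normedAddCommGroup Matrix.normedSpace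

lemma psd_nonneg' {M : Matrix (Fin n) (Fin n) ℝ} (h : M.PosSemidef) (x : Fin n → ℝ) :
    0 ≤ x ⬝ᵥ M *ᵥ x := by simpa using h.dotProduct_mulVec_nonneg x

lemma psd_mulVec_eq_zero {M : Matrix (Fin n) (Fin n) ℝ} (h : M.PosSemidef) {x : Fin n → ℝ}
    (hx : x ⬝ᵥ M *ᵥ x = 0) : M *ᵥ x = 0 :=
  (h.dotProduct_mulVec_zero_iff x).1 (by simpa using hx)

lemma mat_eq_zero_of_mulVec {M : Matrix (Fin n) (Fin n) ℝ} (h : ∀ x, M *ᵥ x = 0) : M = 0 := by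
  ext i j
  have := congrFun (h (Pi.single j 1)) i
  simpa [Matrix.mulVec, dotProduct, Pi.single_apply] using this

lemma psd_neg_eq_zero {M : Matrix (Fin n) (Fin n) ℝ} (h1 : M.PosSemidef)
    (h2 : (-M).PosSemidef) : M = 0 := by
  apply mat_eq_zero_of_mulVec
  intro x
  apply psd_mulVec_eq_zero h1
  have a := psd_nonneg' h1 x
  have b := psd_nonneg' h2 x
  rw [Matrix.neg_mulVec, dotProduct_neg] at b
  linarith

lemma psd_smul' {M : Matrix (Fin n) (Fin n) ℝ} (h : M.PosSemidef) {c : ℝ} (hc : 0 ≤ c) :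
    (c • M).PosSemidef := by
  constructor
  · rw [Matrix.IsHermitian, Matrix.conjTranspose_smul, h.1.eq]; simp
  · exact (h.smul hc).2

lemma conjT_eq_transpose (M : Matrix (Fin n) (Fin n) ℝ) : Mᴴ = Mᵀ := by
  ext i j; simp [Matrix.conjTranspose_apply]

lemma trace_mul_vecMulVec (Q : Matrix (Fin n) (Fin n) ℝ) (x : Fin n → ℝ) :
    (Q * vecMulVec x x).trace = x ⬝ᵥ Q *ᵥ x := by
  simp only [Matrix.trace, Matrix.diag, Matrix.mul_apply, Matrix.vecMulVec_apply,
    dotProduct, Matrix.mulVec, Finset.mul_sum]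
  apply Finset.sum_congr rfl
  intro i _
  apply Finset.sum_congr rfl
  intro j _
  ring

lemma quad_cont (x : Fin n → ℝ) :
    Continuous fun M : Matrix (Fin n) (Fin n) ℝ => x ⬝ᵥ M *ᵥ x :=
  (continuous_const : Continuous fun _ : Matrix (Fin n) (Fin n) ℝ => x).dotProduct
    (continuous_id.matrix_mulVec continuous_const)

lemma quad_add (M M' : Matrix (Fin n) (Fin n) ℝ) (x : Fin n → ℝ) :
    x ⬝ᵥ (M + M') *ᵥ x = x ⬝ᵥ M *ᵥ x + x ⬝ᵥ M' *ᵥ x := by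
  rw [Matrix.add_mulVec, dotProduct_add]

lemma quad_sub (M M' : Matrix (Fin n) (Fin n) ℝ) (x : Fin n → ℝ) :
    x ⬝ᵥ (M - M') *ᵥ x = x ⬝ᵥ M *ᵥ x - x ⬝ᵥ M' *ᵥ x := by
  rw [Matrix.sub_mulVec, dotProduct_sub]

lemma quad_smul (c : ℝ) (M : Matrix (Fin n) (Fin n) ℝ) (x : Fin n → ℝ) :
    x ⬝ᵥ (c • M) *ᵥ x = c * (x ⬝ᵥ M *ᵥ x) := by
  rw [Matrix.smul_mulVec, dotProduct_smul]; rfl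

lemma isClosed_psd : IsClosed {M : Matrix (Fin n) (Fin n) ℝ | M.PosSemidef} := by
  have : {M : Matrix (Fin n) (Fin n) ℝ | M.PosSemidef}
      = {M : Matrix (Fin n) (Fin n) ℝ | Mᴴ = M} ∩ ⋂ x : Fin n → ℝ,
        {M : Matrix (Fin n) (Fin n) ℝ | 0 ≤ x ⬝ᵥ M *ᵥ x} := by
    ext M
    simp only [Set.mem_setOf_eq, Set.mem_inter_iff, Set.mem_iInter]
    constructor
    · intro h; exact ⟨h.1, fun x => psd_nonneg' h x⟩
    · intro h; exact Matrix.PosSemidef.of_dotProduct_mulVec_nonneg h.1 fun x => by simpa using h.2 x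
  rw [this]
  exact IsClosed.inter (isClosed_eq (continuous_id.matrix_conjTranspose) continuous_id)
    (isClosed_iInter fun x => isClosed_le continuous_const (quad_cont x))

lemma exists_projection {n : ℕ} {A : Matrix (Fin n) (Fin n) ℝ} (hA : A.PosSemidef) :
    ∃ P G : Matrix (Fin n) (Fin n) ℝ, P = A * G ∧ P * A = A ∧ P * P = P ∧ Pᵀ = P := by
  have hH : A.IsHermitian := hA.1
  set U : Matrix (Fin n) (Fin n) ℝ := (hH.eigenvectorUnitary : Matrix (Fin n) (Fin n) ℝ) with hU
  have hUU : (star U) * U = 1 := Matrix.UnitaryGroup.star_mul_self hH.eigenvectorUnitary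
  set e : Fin n → ℝ := hH.eigenvalues with he
  have hAeq : A = U * diagonal e * star U := by
    have := hH.spectral_theorem; simpa using this
  have key : ∀ f g : Fin n → ℝ, (U * diagonal f * star U) * (U * diagonal g * star U)
      = U * diagonal (fun i => f i * g i) * star U := by
    intro f g
    calc (U * diagonal f * star U) * (U * diagonal g * star U)
        = U * (diagonal f * ((star U * U) * (diagonal g * star U))) := by
          simp only [mul_assoc]
      _ = U * diagonal (fun i => f i * g i) * star U := by
          rw [hUU, one_mul, ← Matrix.diagonal_mul_diagonal]
          simp only [mul_assoc]
  have hherm : ∀ f : Fin n → ℝ, (U * diagonal f * star U)ᵀ = U * diagonal f * star U := by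
    intro f
    have h1 : (U * diagonal f * star U)ᴴ = U * diagonal f * star U := by
      simp only [conjTranspose_mul, star_eq_conjTranspose, conjTranspose_conjTranspose,
        diagonal_conjTranspose]
      simp [mul_assoc, star_trivial]
    have h2 : (U * diagonal f * star U)ᵀ = (U * diagonal f * star U)ᴴ := by
      ext i j; simp [Matrix.conjTranspose_apply]
    rw [h2, h1]
  refine ⟨U * diagonal (fun i => if e i = 0 then 0 else 1) * star U,
         U * diagonal (fun i => (e i)⁻¹) * star U, ?_, ?_, ?_, hherm _⟩
  · rw [hAeq, key]
    have : (fun i => e i * (e i)⁻¹) = fun i => if e i = 0 then (0:ℝ) else 1 := by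
      funext i
      by_cases h : e i = 0
      · simp [h]
      · simp [h, mul_inv_cancel₀ h]
    rw [this]
  · rw [hAeq, key]
    have : (fun i => (if e i = 0 then (0:ℝ) else 1) * e i) = e := by
      funext i
      by_cases h : e i = 0 <;> simp [h]
    rw [this]
  · rw [key]
    have : (fun i => (if e i = 0 then (0:ℝ) else 1) * (if e i = 0 then (0:ℝ) else 1))
        = fun i => if e i = 0 then (0:ℝ) else 1 := by
      funext i
      by_cases h : e i = 0 <;> simp [h]
    rw [this]


theorem aux_isClosed {n : ℕ} (x₀ : Fin n → ℝ) (L : Submodule ℝ (Matrix (Fin n) (Fin n) ℝ))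
    (hrec : ∀ B ∈ L, B.PosSemidef → x₀ ⬝ᵥ B *ᵥ x₀ = 0 → B = 0) :
    IsClosed {Z : Matrix (Fin n) (Fin n) ℝ |
      ∃ M ∈ L, (-(Z - M)).PosSemidef ∧ x₀ ⬝ᵥ (Z - M) *ᵥ x₀ = 0} := by
  have hLc : IsClosed (L : Set (Matrix (Fin n) (Fin n) ℝ)) :=
    Submodule.closed_of_finiteDimensional L
  haveI : FirstCountableTopology (Matrix (Fin n) (Fin n) ℝ) :=
    inferInstanceAs (FirstCountableTopology (Fin n → Fin n → ℝ))
  apply IsSeqClosed.isClosed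
  intro Z Zl hmem htend
  choose M hM hpsd hquad using hmem
  by_cases hb : ∃ c, ∀ k, ‖M k‖ ≤ c
  · obtain ⟨c, hc⟩ := hb
    have hcpt : IsCompact (Metric.closedBall (0 : Matrix (Fin n) (Fin n) ℝ) c ∩ L) :=
      (isCompact_closedBall 0 c).inter_right hLc
    obtain ⟨B, hBmem, φ, hφ, hBl⟩ := hcpt.tendsto_subseq
      (x := M) (fun k => ⟨by simpa [Metric.mem_closedBall, dist_zero_right] using hc k, hM k⟩)
    have hZφ : Filter.Tendsto (fun j => Z (φ j)) Filter.atTop (nhds Zl) :=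
      htend.comp hφ.tendsto_atTop
    refine ⟨B, hBmem.2, ?_, ?_⟩
    · have h1 : Filter.Tendsto (fun j => -(Z (φ j) - M (φ j))) Filter.atTop (nhds (-(Zl - B))) :=
        (hZφ.sub hBl).neg
      exact isClosed_psd.mem_of_tendsto h1 (Filter.Eventually.of_forall fun j => hpsd (φ j))
    · have h2 : Filter.Tendsto (fun j => x₀ ⬝ᵥ (Z (φ j) - M (φ j)) *ᵥ x₀) Filter.atTop
          (nhds (x₀ ⬝ᵥ (Zl - B) *ᵥ x₀)) :=
        ((quad_cont x₀).tendsto _).comp (hZφ.sub hBl)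
      have h3 : (fun j => x₀ ⬝ᵥ (Z (φ j) - M (φ j)) *ᵥ x₀) = fun _ => (0:ℝ) :=
        funext fun j => hquad (φ j)
      rw [h3] at h2
      exact (tendsto_nhds_unique h2 tendsto_const_nhds)
  · exfalso
    push_neg at hb
    choose g hg using hb
    set kk : ℕ → ℕ := fun j => g (j : ℝ) with hkk
    set t : ℕ → ℝ := fun j => ‖M (kk j)‖ with ht
    have htj : ∀ j : ℕ, (j : ℝ) < t j := fun j => hg (j : ℝ)
    have htpos : ∀ j, 0 < t j := fun j => lt_of_le_of_lt (Nat.cast_nonneg j) (htj j)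
    set W : ℕ → Matrix (Fin n) (Fin n) ℝ := fun j => (t j)⁻¹ • M (kk j) with hW
    have hWmem : ∀ j, W j ∈ Metric.sphere (0 : Matrix (Fin n) (Fin n) ℝ) 1 ∩ L := by
      intro j
      constructor
      · rw [mem_sphere_zero_iff_norm, hW]
        rw [norm_smul, Real.norm_eq_abs, abs_inv, abs_of_pos (htpos j)]
        exact inv_mul_cancel₀ (ne_of_gt (htpos j))
      · exact L.smul_mem _ (hM (kk j))
    have hcpt : IsCompact (Metric.sphere (0 : Matrix (Fin n) (Fin n) ℝ) 1 ∩ L) :=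
      (isCompact_sphere 0 1).inter_right hLc
    obtain ⟨B, hBmem, φ, hφ, hBl⟩ := hcpt.tendsto_subseq (x := W) hWmem
    -- Z is bounded
    have hZbd : ∃ c0 : ℝ, ∀ k, ‖Z k‖ ≤ c0 := by
      obtain ⟨R, hR0, hR⟩ := cauchySeq_bdd htend.cauchySeq
      refine ⟨R + ‖Z 0‖, fun k => ?_⟩
      have := hR k 0
      calc ‖Z k‖ ≤ dist (Z k) (Z 0) + ‖Z 0‖ := by
            rw [dist_eq_norm]
            have := norm_sub_norm_le (Z k) (Z 0)
            linarith [norm_sub_norm_le (Z k) (Z 0)]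
        _ ≤ R + ‖Z 0‖ := by linarith
    obtain ⟨c0, hc0⟩ := hZbd
    have htinf : Filter.Tendsto t Filter.atTop Filter.atTop :=
      Filter.tendsto_atTop_mono (fun j => (htj j).le) tendsto_natCast_atTop_atTop
    have hZt : Filter.Tendsto (fun j => (t j)⁻¹ • Z (kk j)) Filter.atTop (nhds 0) := by
      refine squeeze_zero_norm (a := fun j => c0 * (t j)⁻¹) ?_ ?_
      · intro j
        rw [norm_smul, Real.norm_eq_abs, abs_inv, abs_of_pos (htpos j), mul_comm]
        exact mul_le_mul_of_nonneg_right (hc0 (kk j)) (inv_nonneg.mpr (htpos j).le)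
      · have : Filter.Tendsto (fun j => (t j)⁻¹) Filter.atTop (nhds 0) :=
          tendsto_inv_atTop_zero.comp htinf
        simpa using this.const_mul c0
    have hVpsd : ∀ j, (W j - (t j)⁻¹ • Z (kk j)).PosSemidef := by
      intro j
      have : W j - (t j)⁻¹ • Z (kk j) = (t j)⁻¹ • (-(Z (kk j) - M (kk j))) := by
        rw [hW]; rw [smul_neg, smul_sub]; abel
      rw [this]
      exact psd_smul' (hpsd (kk j)) (inv_nonneg.mpr (htpos j).le)
    have hVlim : Filter.Tendsto (fun j => W (φ j) - (t (φ j))⁻¹ • Z (kk (φ j)))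
        Filter.atTop (nhds B) := by
      have := hBl.sub (hZt.comp hφ.tendsto_atTop)
      simpa using this
    have hBpsd : B.PosSemidef :=
      isClosed_psd.mem_of_tendsto hVlim (Filter.Eventually.of_forall fun j => hVpsd (φ j))
    have hBquad : x₀ ⬝ᵥ B *ᵥ x₀ = 0 := by
      have e1 : ∀ j, x₀ ⬝ᵥ (W j) *ᵥ x₀ = x₀ ⬝ᵥ ((t j)⁻¹ • Z (kk j)) *ᵥ x₀ := by
        intro j
        rw [hW, quad_smul, quad_smul]
        have := hquad (kk j)
        rw [quad_sub] at this
        have h4 : x₀ ⬝ᵥ (M (kk j)) *ᵥ x₀ = x₀ ⬝ᵥ (Z (kk j)) *ᵥ x₀ := by linarith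
        rw [h4]
      have e2 : Filter.Tendsto (fun j => x₀ ⬝ᵥ (W j) *ᵥ x₀) Filter.atTop (nhds 0) := by
        have : Filter.Tendsto (fun j => x₀ ⬝ᵥ ((t j)⁻¹ • Z (kk j)) *ᵥ x₀)
            Filter.atTop (nhds 0) := by
          have := ((quad_cont x₀).tendsto _).comp hZt
          simpa [Function.comp_def] using this
        exact (funext e1 : _) ▸ this
      have e3 : Filter.Tendsto (fun j => x₀ ⬝ᵥ (W (φ j)) *ᵥ x₀) Filter.atTop
          (nhds (x₀ ⬝ᵥ B *ᵥ x₀)) := ((quad_cont x₀).tendsto _).comp hBl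
      exact tendsto_nhds_unique e3 (e2.comp hφ.tendsto_atTop)
    have hB0 : B = 0 := hrec B hBmem.2 hBpsd hBquad
    have : ‖B‖ = 1 := mem_sphere_zero_iff_norm.mp hBmem.1
    rw [hB0, norm_zero] at this
    exact zero_ne_one this

end Aux

/-- **Lemma 2 (closedness of `S`).** If `S` satisfies the completeness condition at
`X₀ = x₀x₀ᵀ`, then `S` is closed (in the Frobenius norm topology). -/
theorem S_isClosed_of_complete {n m : ℕ}
    (A : Fin m → Matrix (Fin n) (Fin n) ℝ)
    (x₀ : Fin n → ℝ) (X₀ : Matrix (Fin n) (Fin n) ℝ)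
    (S : Set (Matrix (Fin n) (Fin n) ℝ))
    (hX₀ : X₀ = vecMulVec x₀ x₀)
    (hA : ∀ i, (A i).IsSymm)
    (hS : S = {Y : Matrix (Fin n) (Fin n) ℝ |
      ∃ (lam : Fin m → ℝ) (Q : Matrix (Fin n) (Fin n) ℝ),
        (-Q).PosSemidef ∧ (Q * X₀).trace = 0 ∧ Y = (∑ i, lam i • A i) + Q})
    (hcomplete : ∀ lam : Fin m → ℝ,
      (∑ i, lam i • A i).PosSemidef → ((∑ i, lam i • A i) * X₀).trace = 0 →
      ∀ (y q : Fin n → ℝ), (∃ v, (∑ i, lam i • A i).mulVec v = q) →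
        vecMulVec y q + vecMulVec q y ∈ S) :
    IsClosed S := by
  classical
  set T : (Fin m → ℝ) → Matrix (Fin n) (Fin n) ℝ := fun lam => ∑ i, lam i • A i with hT
  have hTadd : ∀ a b, T (a + b) = T a + T b := by
    intro a b; simp [hT, add_smul, Finset.sum_add_distrib]
  have hTsymm : ∀ lam, (T lam)ᵀ = T lam := by
    intro lam
    simp only [hT, Matrix.transpose_sum, Matrix.transpose_smul]
    exact Finset.sum_congr rfl fun i _ => by rw [(hA i).eq]
  have htr : ∀ Q : Matrix (Fin n) (Fin n) ℝ, (Q * X₀).trace = x₀ ⬝ᵥ Q *ᵥ x₀ := by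
    intro Q; rw [hX₀]; exact trace_mul_vecMulVec Q x₀
  -- S basic properties
  have hS0 : (0 : Matrix (Fin n) (Fin n) ℝ) ∈ S := by
    rw [hS]
    exact ⟨0, 0, by rw [neg_zero]; exact Matrix.PosSemidef.zero, by simp, by simp⟩
  have hSadd : ∀ {Y1 Y2 : Matrix (Fin n) (Fin n) ℝ}, Y1 ∈ S → Y2 ∈ S → Y1 + Y2 ∈ S := by
    intro Y1 Y2 h1 h2
    rw [hS] at h1 h2 ⊢
    obtain ⟨l1, Q1, hq1, ht1, rfl⟩ := h1
    obtain ⟨l2, Q2, hq2, ht2, rfl⟩ := h2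
    refine ⟨l1 + l2, Q1 + Q2, ?_, ?_, ?_⟩
    · rw [neg_add]; exact hq1.add hq2
    · rw [Matrix.add_mul, Matrix.trace_add, ht1, ht2, add_zero]
    · rw [show (∑ i, (l1 + l2) i • A i) = (∑ i, l1 i • A i) + (∑ i, l2 i • A i) by
        simp [add_smul, Finset.sum_add_distrib]]
      abel
  have hSsymm : ∀ Y ∈ S, Yᵀ = Y := by
    intro Y hY
    rw [hS] at hY
    obtain ⟨l, Q, hq, -, rfl⟩ := hY
    have hQ : Qᵀ = Q := by
      have h2 : (-Q)ᵀ = -Q := by rw [← conjT_eq_transpose]; exact hq.1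
      rw [Matrix.transpose_neg] at h2
      exact neg_inj.mp h2
    rw [Matrix.transpose_add, hQ]
    congr 1
    exact hTsymm l
  -- the recession cone K and a maximal-range element
  set K : Set (Fin m → ℝ) := {μ | (T μ).PosSemidef ∧ x₀ ⬝ᵥ (T μ) *ᵥ x₀ = 0} with hK
  have hT0 : T 0 = 0 := by simp [hT]
  have hK0 : (0 : Fin m → ℝ) ∈ K := by
    constructor
    · rw [hT0]; exact Matrix.PosSemidef.zero
    · rw [hT0, Matrix.zero_mulVec, dotProduct_zero]
  set kd : (Fin m → ℝ) → ℕ :=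
    fun μ => Module.finrank ℝ ↥(LinearMap.ker (Matrix.mulVecLin (T μ))) with hkd
  have hdne : (kd '' K).Nonempty := ⟨kd 0, 0, hK0, rfl⟩
  obtain ⟨μs, hμsK, hμskd⟩ := Nat.sInf_mem hdne
  set Astar : Matrix (Fin n) (Fin n) ℝ := T μs with hAstar
  have hsplit : ∀ {μ ν : Fin m → ℝ} (x : Fin n → ℝ), μ ∈ K → ν ∈ K →
      (T μ + T ν) *ᵥ x = 0 → T μ *ᵥ x = 0 := by
    intro μ ν x hμ hν hx
    have hq : x ⬝ᵥ (T μ + T ν) *ᵥ x = 0 := by rw [hx, dotProduct_zero]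
    rw [quad_add] at hq
    have h1 := psd_nonneg' hμ.1 x
    have h2 := psd_nonneg' hν.1 x
    exact psd_mulVec_eq_zero hμ.1 (by linarith)
  have hmax : ∀ μ ∈ K, ∀ x, Astar *ᵥ x = 0 → T μ *ᵥ x = 0 := by
    intro μ hμ x hx
    have hsum : (μs + μ) ∈ K := by
      constructor
      · rw [hTadd]; exact hμsK.1.add hμ.1
      · rw [hTadd, quad_add, hμsK.2, hμ.2, add_zero]
    have hle : LinearMap.ker (Matrix.mulVecLin (T (μs + μ)))
        ≤ LinearMap.ker (Matrix.mulVecLin (T μs)) := by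
      intro y hy
      rw [LinearMap.mem_ker, Matrix.mulVecLin_apply] at hy ⊢
      rw [hTadd] at hy
      exact hsplit y hμsK hμ hy
    have hfr : Module.finrank ℝ ↥(LinearMap.ker (Matrix.mulVecLin (T μs)))
        ≤ Module.finrank ℝ ↥(LinearMap.ker (Matrix.mulVecLin (T (μs + μ)))) := by
      have : kd μs ≤ kd (μs + μ) := by
        rw [hμskd]; exact Nat.sInf_le ⟨μs + μ, hsum, rfl⟩
      simpa [hkd] using this
    have heq := Submodule.eq_of_le_of_finrank_le hle hfr
    have hx2 : x ∈ LinearMap.ker (Matrix.mulVecLin (T (μs + μ))) := by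
      rw [heq, LinearMap.mem_ker, Matrix.mulVecLin_apply]
      exact hx
    rw [LinearMap.mem_ker, Matrix.mulVecLin_apply, hTadd] at hx2
    exact hsplit x hμ hμsK (by rwa [add_comm (T μ)])
  -- spectral projection
  obtain ⟨P, G, hPG, hPA, hPP, hPt⟩ := exists_projection hμsK.1
  have hAt : Astarᵀ = Astar := by rw [← conjT_eq_transpose]; exact hμsK.1.1
  have hAP : Astar * P = Astar := by
    have h := congrArg Matrix.transpose hPA
    rwa [Matrix.transpose_mul, hAt, hPt] at h
  have hAx₀ : Astar *ᵥ x₀ = 0 := psd_mulVec_eq_zero hμsK.1 hμsK.2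
  have hPx₀ : P *ᵥ x₀ = 0 := by
    have hP2 : P = Gᵀ * Astar := by
      rw [← hPt, hPG, Matrix.transpose_mul, hAt]
    rw [hP2, ← Matrix.mulVec_mulVec, hAx₀, Matrix.mulVec_zero]
  set N : Matrix (Fin n) (Fin n) ℝ := 1 - P with hN
  have hNt : Nᵀ = N := by rw [hN, Matrix.transpose_sub, Matrix.transpose_one, hPt]
  have hNN : N * N = N := by
    have h : (1 - P) * (1 - P) = 1 - P - P + P * P := by noncomm_ring
    rw [hN, h, hPP]; abel
  have hAN : Astar * N = 0 := by rw [hN, Matrix.mul_sub, mul_one, hAP, sub_self]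
  have hNx₀ : N *ᵥ x₀ = x₀ := by rw [hN, Matrix.sub_mulVec, Matrix.one_mulVec, hPx₀, sub_zero]
  set Phi : Matrix (Fin n) (Fin n) ℝ → Matrix (Fin n) (Fin n) ℝ := fun M => N * M * N with hPhi
  have hPhiCont : Continuous Phi :=
    (continuous_const.matrix_mul continuous_id).matrix_mul continuous_const
  have hPhiAdd : ∀ X Y, Phi (X + Y) = Phi X + Phi Y := by
    intro X Y; simp [hPhi, Matrix.mul_add, Matrix.add_mul]
  have hPhiSub : ∀ X Y, Phi (X - Y) = Phi X - Phi Y := by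
    intro X Y; simp [hPhi, Matrix.mul_sub, Matrix.sub_mul]
  have hPhiIdem : ∀ X, Phi (Phi X) = Phi X := by
    intro X
    simp only [hPhi]
    have h1 : N * (N * X * N) = (N * N) * X * N := by rw [← mul_assoc, ← mul_assoc]
    rw [h1, hNN, mul_assoc, hNN]
  have hPhiT : ∀ c : Fin m → ℝ, Phi (T c) = ∑ i, c i • Phi (A i) := by
    intro c
    simp only [hPhi, hT]
    rw [Finset.mul_sum, Finset.sum_mul]
    apply Finset.sum_congr rfl
    intro i _
    rw [Matrix.mul_smul, Matrix.smul_mul]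
  have hquadPhi : ∀ Q : Matrix (Fin n) (Fin n) ℝ,
      x₀ ⬝ᵥ (Phi Q) *ᵥ x₀ = x₀ ⬝ᵥ Q *ᵥ x₀ := by
    intro Q
    simp only [hPhi]
    rw [← Matrix.mulVec_mulVec, ← Matrix.mulVec_mulVec, hNx₀]
    rw [Matrix.dotProduct_mulVec x₀ N]
    have : x₀ ᵥ* N = x₀ := by
      rw [← hNt, Matrix.vecMul_transpose, hNx₀]
    rw [this]
  have hK_N : ∀ μ ∈ K, T μ * N = 0 := by
    intro μ hμ
    apply mat_eq_zero_of_mulVec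
    intro x
    rw [← Matrix.mulVec_mulVec]
    apply hmax μ hμ
    rw [Matrix.mulVec_mulVec, hAN, Matrix.zero_mulVec]
  -- generators are in S
  have hcomp' := hcomplete μs hμsK.1 (by rw [htr]; exact hμsK.2)
  have hgenB : ∀ B : Matrix (Fin n) (Fin n) ℝ, Astar * B + (Astar * B)ᵀ ∈ S := by
    intro B
    have hsum : Astar * B + (Astar * B)ᵀ
        = ∑ j, (vecMulVec (Pi.single j 1) (fun i => (Astar * B) i j)
              + vecMulVec (fun i => (Astar * B) i j) (Pi.single j 1)) := by
      ext i k
      simp only [Matrix.sum_apply, Matrix.add_apply, Matrix.vecMulVec_apply,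
        Matrix.transpose_apply, Pi.single_apply, ite_mul, mul_ite, one_mul, mul_one,
        zero_mul, mul_zero, Finset.sum_add_distrib]
      rw [Finset.sum_ite_eq Finset.univ i (fun j => (Astar * B) k j),
        Finset.sum_ite_eq Finset.univ k (fun j => (Astar * B) i j)]
      simp [add_comm]
    rw [hsum]
    apply Finset.sum_induction _ (· ∈ S) (fun a b ha hb => hSadd ha hb) hS0
    intro j _
    apply hcomp' (Pi.single j 1) (fun i => (Astar * B) i j)
    refine ⟨fun k => B k j, ?_⟩
    funext i
    simp [Matrix.mulVec, Matrix.mul_apply, dotProduct]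
    rfl
  -- the decomposition M ↦ Φ M modulo S
  have hdecompS : ∀ M : Matrix (Fin n) (Fin n) ℝ, Mᵀ = M →
      (M - Phi M) ∈ S ∧ (Phi M - M) ∈ S := by
    intro M hMt
    set B0 : Matrix (Fin n) (Fin n) ℝ := G * (M * N) + (2⁻¹ : ℝ) • (G * (M * P)) with hB0
    have e1 : Astar * (G * (M * N)) = P * M * N := by
      rw [← mul_assoc, ← hPG, ← mul_assoc]
    have e2 : Astar * (G * (M * P)) = P * M * P := by
      rw [← mul_assoc, ← hPG, ← mul_assoc]
    have h1 : Astar * B0 = P * M * N + (2⁻¹ : ℝ) • (P * M * P) := by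
      rw [hB0, Matrix.mul_add, Matrix.mul_smul, e1, e2]
    have h2 : (Astar * B0)ᵀ = N * M * P + (2⁻¹ : ℝ) • (P * M * P) := by
      rw [h1]
      simp only [Matrix.transpose_add, Matrix.transpose_smul, Matrix.transpose_mul,
        hPt, hNt, hMt, mul_assoc]
    have hY : Astar * B0 + (Astar * B0)ᵀ = M - Phi M := by
      rw [h2, h1]
      simp only [hPhi, hN]
      simp only [Matrix.mul_sub, Matrix.sub_mul, Matrix.mul_one, Matrix.one_mul,
        mul_one, one_mul, smul_sub]
      module
    constructor
    · rw [← hY]; exact hgenB B0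
    · have hneg : Astar * (-B0) + (Astar * (-B0))ᵀ = Phi M - M := by
        rw [mul_neg, Matrix.transpose_neg, ← neg_add, hY, neg_sub]
      rw [← hneg]; exact hgenB (-B0)
  -- the span of the compressed generators
  set L' : Submodule ℝ (Matrix (Fin n) (Fin n) ℝ) :=
    Submodule.span ℝ (Set.range fun i => Phi (A i)) with hL'
  have hrec' : ∀ B ∈ L', B.PosSemidef → x₀ ⬝ᵥ B *ᵥ x₀ = 0 → B = 0 := by
    intro B hB hBpsd hBquad
    rw [hL', Submodule.mem_span_range_iff_exists_fun] at hB
    obtain ⟨c, hc⟩ := hB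
    have hBPhi : B = Phi (T c) := by rw [hPhiT, hc]
    have hWS : Phi (T c) - T c ∈ S := (hdecompS (T c) (hTsymm c)).2
    rw [hS] at hWS
    obtain ⟨α, Q', hQ', htQ', hWeq⟩ := hWS
    have hTcα : T (c + α) = B - Q' := by
      rw [hTadd, hBPhi]
      have hTα : T α = (Phi (T c) - T c) - Q' := by
        rw [hWeq]
        have : (∑ i, α i • A i) = T α := rfl
        rw [this]; abel
      rw [hTα]; abel
    have hKcα : (c + α) ∈ K := by
      constructor
      · rw [hTcα, sub_eq_add_neg]; exact hBpsd.add hQ'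
      · rw [hTcα, quad_sub, hBquad]
        have hq0 : x₀ ⬝ᵥ Q' *ᵥ x₀ = 0 := by rw [← htr]; exact htQ'
        rw [hq0]; ring
    have h0 : T (c + α) * N = 0 := hK_N _ hKcα
    have hPhi0 : Phi (T (c + α)) = 0 := by
      simp only [hPhi]
      rw [mul_assoc, h0, mul_zero]
    have hPhiQ : Phi Q' = B := by
      have hcongr := congrArg Phi hTcα
      rw [hPhi0, hPhiSub] at hcongr
      have hPB : Phi B = B := by rw [hBPhi, hPhiIdem]
      rw [hPB] at hcongr
      have := sub_eq_zero.mp hcongr.symm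
      exact this.symm
    have hnegB : (-B).PosSemidef := by
      have hpsd := hQ'.mul_mul_conjTranspose_same N
      rw [conjT_eq_transpose, hNt] at hpsd
      have : N * (-Q') * N = -B := by
        rw [Matrix.mul_neg, Matrix.neg_mul, ← hPhiQ]
      rwa [this] at hpsd
    exact psd_neg_eq_zero hBpsd hnegB
  have hS'cl := aux_isClosed x₀ L' hrec'
  have hfinal : S = {M : Matrix (Fin n) (Fin n) ℝ | Mᵀ = M} ∩
      Phi ⁻¹' {Z : Matrix (Fin n) (Fin n) ℝ |
        ∃ M' ∈ L', (-(Z - M')).PosSemidef ∧ x₀ ⬝ᵥ (Z - M') *ᵥ x₀ = 0} := by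
    ext M
    constructor
    · intro hM
      refine ⟨hSsymm M hM, ?_⟩
      rw [hS] at hM
      obtain ⟨l, Q, hQ, htQ, rfl⟩ := hM
      refine ⟨Phi (T l), ?_, ?_, ?_⟩
      · rw [hPhiT]
        exact Submodule.sum_mem _ fun i _ =>
          Submodule.smul_mem _ _ (Submodule.subset_span ⟨i, rfl⟩)
      · have hPQ : Phi ((∑ i, l i • A i) + Q) - Phi (T l) = Phi Q := by
          have : (∑ i, l i • A i) = T l := rfl
          rw [this, hPhiAdd]; abel
        rw [hPQ]
        have hpsd := hQ.mul_mul_conjTranspose_same N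
        rw [conjT_eq_transpose, hNt] at hpsd
        have : N * (-Q) * N = -(Phi Q) := by
          rw [Matrix.mul_neg, Matrix.neg_mul]
        rwa [this] at hpsd
      · have hPQ : Phi ((∑ i, l i • A i) + Q) - Phi (T l) = Phi Q := by
          have : (∑ i, l i • A i) = T l := rfl
          rw [this, hPhiAdd]; abel
        rw [hPQ, hquadPhi, ← htr]
        exact htQ
    · rintro ⟨hMt, hMp⟩
      obtain ⟨M', hM'L, hM'psd, hM'quad⟩ := hMp
      rw [hL', Submodule.mem_span_range_iff_exists_fun] at hM'L
      obtain ⟨c, hc⟩ := hM'L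
      have hM'eq : M' = Phi (T c) := by rw [hPhiT, hc]
      have m1 : T c + (Phi M - M') ∈ S := by
        rw [hS]
        exact ⟨c, Phi M - M', hM'psd, by rw [htr]; exact hM'quad, rfl⟩
      have m2 : Phi (T c) - T c ∈ S := (hdecompS _ (hTsymm c)).2
      have m3 : M - Phi M ∈ S := (hdecompS M hMt).1
      have hMeq : M = (T c + (Phi M - M')) + ((Phi (T c) - T c) + (M - Phi M)) := by
        rw [hM'eq]; abel
      rw [hMeq]
      exact hSadd m1 (hSadd m2 m3)
  rw [hfinal]
  refine IsClosed.inter ?_ (hS'cl.preimage hPhiCont)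
  exact isClosed_eq (continuous_id.matrix_transpose) continuous_id
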